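/- For all m ≥ 0, ∑_{n=0}^{m} (-1)^n n!/(n+1) · S(m,n) = B_m, where S(m,n) are the Stirling numbers of the second kind and B_m the Bernoulli numbers. -/

import Mathlib

open PowerSeries Finset

noncomputable def logOneAdd : PowerSeries ℚ :=
  PowerSeries.mk fun k => if k = 0 then 0 else (-1 : ℚ)^(k+1) / k

noncomputable def onePow (x : ℚ) : PowerSeries ℚ :=
  PowerSeries.mk fun k => (∏ i ∈ Finset.range k, (x - (i : ℚ))) / (Nat.factorial k : ℚ)

noncomputable def expX (x : ℚ) : PowerSeries ℚ :=
  PowerSeries.mk fun k => x ^ k / (Nat.factorial k : ℚ)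


noncomputable abbrev bexs2U : PowerSeries ℚ := PowerSeries.exp ℚ - 1

lemma bexs2DerivExp : d⁄dX ℚ (PowerSeries.exp ℚ) = PowerSeries.exp ℚ := by
  ext n
  rw [coeff_derivative, coeff_exp, coeff_exp]
  simp [Nat.factorial_succ]
  field_simp

lemma bexs2_coeff_u_pow_zero {k n : ℕ} (h : k < n) : coeff k (bexs2U ^ n) = 0 := by
  have hX : (PowerSeries.X : PowerSeries ℚ) ∣ bexs2U := by
    rw [PowerSeries.X_dvd_iff]; simp
  have : (PowerSeries.X : PowerSeries ℚ) ^ n ∣ bexs2U ^ n := pow_dvd_pow_of_dvd hX n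
  exact (PowerSeries.X_pow_dvd_iff.mp this) k h

lemma bexs2_key_deriv (N : ℕ) :
    d⁄dX ℚ (∑ n ∈ range N, ((-1:ℚ)^n/(n+1)) • bexs2U^(n+1)) = 1 - (-bexs2U)^N := by
  rw [map_sum]
  have h1 : ∀ n : ℕ, d⁄dX ℚ (((-1:ℚ)^n/(n+1)) • bexs2U^(n+1)) = (-bexs2U)^n * PowerSeries.exp ℚ := by
    intro n
    rw [Derivation.map_smul, Derivation.leibniz_pow]
    have hdu : d⁄dX ℚ bexs2U = PowerSeries.exp ℚ := by
      show d⁄dX ℚ (PowerSeries.exp ℚ - 1) = _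
      rw [map_sub, bexs2DerivExp]
      simp
    rw [hdu]
    simp only [Nat.add_sub_cancel, smul_eq_mul]
    rw [← Nat.cast_smul_eq_nsmul ℚ (n+1), smul_smul]
    have : (-1:ℚ)^n/(n+1) * (n+1) = (-1:ℚ)^n := by
      field_simp
    rw [Nat.cast_add, Nat.cast_one, this, PowerSeries.smul_eq_C_mul, neg_pow bexs2U,
      map_pow, map_neg, map_one]
    ring
  simp_rw [h1]
  rw [← Finset.sum_mul]
  have hexp : PowerSeries.exp ℚ = -((-bexs2U) - 1) := by simp [bexs2U]
  rw [hexp, mul_neg, geom_sum_mul, neg_sub]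

lemma bexs2_coeff_pow_zero {v : PowerSeries ℚ} (hv : constantCoeff v = 0) {k n : ℕ} (h : k < n) :
    coeff k (v ^ n) = 0 := by
  have hX : (PowerSeries.X : PowerSeries ℚ) ∣ v := by rw [PowerSeries.X_dvd_iff]; exact hv
  exact (PowerSeries.X_pow_dvd_iff.mp (pow_dvd_pow_of_dvd hX n)) k h

lemma bexs2_coeffL (m : ℕ) :
    coeff m (∑ n ∈ range (m+1), ((-1:ℚ)^n/(n+1)) • bexs2U^(n+1)) = coeff m PowerSeries.X := by
  have hu0 : constantCoeff bexs2U = 0 := by simp [bexs2U]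
  cases m with
  | zero =>
    rw [map_sum, Finset.sum_eq_zero]
    · simp
    · intro n _
      rw [map_smul, bexs2_coeff_pow_zero hu0 n.succ_pos, smul_zero]
  | succ m =>
    have h := congrArg (coeff m) (bexs2_key_deriv (m+2))
    rw [coeff_derivative, map_sub, bexs2_coeff_pow_zero (by simp [hu0]) (by omega : m < m+2),
      sub_zero] at h
    have hm : ((m:ℚ)+1) ≠ 0 := by positivity
    have h2 : coeff (m+1) (∑ n ∈ range (m+2), ((-1:ℚ)^n/(n+1)) • bexs2U^(n+1))
        = coeff m 1 / ((m:ℚ)+1) := by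
      rw [eq_div_iff hm, ← h]
    rw [h2, PowerSeries.coeff_one, PowerSeries.coeff_X]
    cases m with
    | zero => norm_num
    | succ k => simp

theorem bernoulli_explicit_stirling2 (B : ℕ → ℚ) (S : ℕ → ℕ → ℚ)
    (hB : PowerSeries.mk (fun l => B l / (Nat.factorial l : ℚ)) * (PowerSeries.exp ℚ - 1) = PowerSeries.X) (hS : ∀ n : ℕ, (PowerSeries.exp ℚ - 1) ^ n = PowerSeries.C (Nat.factorial n : ℚ) * PowerSeries.mk (fun m => S m n / (Nat.factorial m : ℚ))) :
    ∀ m : ℕ, ∑ n ∈ Finset.range (m + 1),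
        (-1 : ℚ) ^ n * (Nat.factorial n : ℚ) / (n + 1 : ℚ) * S m n = B m := by
  set T : PowerSeries ℚ := PowerSeries.mk fun k =>
    (∑ n ∈ range (k + 1), (-1 : ℚ) ^ n * (Nat.factorial n : ℚ) / (n + 1 : ℚ) * S k n)
      / (Nat.factorial k : ℚ) with hT
  -- coefficients of T
  have hcoeffT : ∀ k : ℕ, coeff k T
      = ∑ n ∈ range (k + 1), ((-1:ℚ)^n/(n+1)) * coeff k (bexs2U ^ n) := by
    intro k
    rw [hT, coeff_mk, Finset.sum_div]
    refine Finset.sum_congr rfl fun n _ => ?_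
    have : coeff k (bexs2U ^ n) = (Nat.factorial n : ℚ) * (S k n / (Nat.factorial k : ℚ)) := by
      rw [show bexs2U ^ n = _ from hS n, coeff_C_mul, coeff_mk]
    rw [this]
    ring
  -- T agrees with the truncated sums up to degree m
  have hagree : ∀ m k : ℕ, k ≤ m →
      coeff k T = coeff k (∑ n ∈ range (m+1), ((-1:ℚ)^n/(n+1)) • bexs2U ^ n) := by
    intro m k hkm
    rw [hcoeffT, map_sum]
    simp_rw [map_smul, smul_eq_mul]
    refine Finset.sum_subset (by intro x hx; simp at hx ⊢; omega) ?_
    intro n _ hn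
    simp only [Finset.mem_range, not_lt] at hn
    rw [bexs2_coeff_pow_zero (by simp [bexs2U]) (by omega), mul_zero]
  -- T * bexs2U = X
  have hTu : T * bexs2U = PowerSeries.X := by
    ext m
    rw [PowerSeries.coeff_mul]
    have : ∑ p ∈ Finset.HasAntidiagonal.antidiagonal m, coeff p.1 T * coeff p.2 bexs2U
        = coeff m ((∑ n ∈ range (m+1), ((-1:ℚ)^n/(n+1)) • bexs2U ^ n) * bexs2U) := by
      rw [PowerSeries.coeff_mul]
      refine Finset.sum_congr rfl fun p hp => ?_
      rw [Finset.HasAntidiagonal.mem_antidiagonal] at hp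
      rw [hagree m p.1 (by omega)]
    rw [this, Finset.sum_mul]
    have : ∀ n : ℕ, ((-1:ℚ)^n/(n+1)) • bexs2U ^ n * bexs2U = ((-1:ℚ)^n/(n+1)) • bexs2U ^ (n+1) := by
      intro n; rw [smul_mul_assoc, pow_succ]
    simp_rw [this]
    exact bexs2_coeffL m
  -- cancel bexs2U
  have hu : bexs2U ≠ 0 := by
    intro h
    have : coeff 1 bexs2U = 0 := by rw [h, map_zero]
    rw [map_sub, coeff_exp, PowerSeries.coeff_one] at this
    norm_num at this
  have hTB : T = PowerSeries.mk (fun l => B l / (Nat.factorial l : ℚ)) :=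
    mul_right_cancel₀ hu (by rw [hTu, hB])
  intro m
  have h := congrArg (coeff m) hTB
  rw [hT, coeff_mk, coeff_mk] at h
  have hf : (Nat.factorial m : ℚ) ≠ 0 := Nat.cast_ne_zero.mpr m.factorial_ne_zero
  field_simp at h
  rw [← h]
  exact Finset.sum_congr rfl fun n _ => by ring
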